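/- Let (E,C) be a finite bipartite separated graph, with canonical sequence (E_n,C^n) and connecting homomorphisms G(ι_n) : G(M(E_n,C^n)) → G(M(E_{n+1},C^{n+1})). Then the natural homomorphism G(M(E,C)) → lim_n G(M(E_n,C^n)) into the direct limit is a split monomorphism whose cokernel is a free abelian group; more precisely, there exist finite subsets W_k ⊆ E_k^{0,0} (k ≥ 2) such that lim_n G(M(E_n,C^n)) ≅ G(M(E,C)) ⊕ (⊕_{k≥2} ℤ^(W_k)). -/

import Mathlib

/-- A bipartite separated graph: all edges go from a vertex of `V1 = E^{0,1}` to a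
vertex of `V0 = E^{0,0}`, and `C v` is a family of subsets of `r⁻¹(v)`. -/
structure BSG where
  V0 : Type
  V1 : Type
  E : Type
  s : E → V1
  r : E → V0
  C : V0 → Set (Set E)

/-- Being a finite bipartite separated graph. -/
structure BSG.Valid (G : BSG) : Prop where
  finV0 : Finite G.V0
  finV1 : Finite G.V1
  finE : Finite G.E
  mem_r : ∀ v X, X ∈ G.C v → ∀ e ∈ X, G.r e = v
  nonempty_class : ∀ v X, X ∈ G.C v → X.Nonempty
  disj : ∀ v, (G.C v).PairwiseDisjoint id
  cover : ∀ e : G.E, ∃ X ∈ G.C (G.r e), e ∈ X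
  C_nonempty : ∀ v : G.V0, (G.C v).Nonempty
  s_surj : Function.Surjective G.s

/-- The set of new vertices `v(x₁,…,x_{k_u})` of the graph `(E₁, C¹)`: pairs of a
vertex `u ∈ E^{0,0}` and a choice of one edge from each class of `C_u`. -/
def BSG.NewVert (G : BSG) : Type :=
  Σ u : G.V0, (X : {X : Set G.E // X ∈ G.C u}) → ↥X.1

/-- The set of edges of `(E₁, C¹)`: an edge `α^{xᵢ}(x₁,…,x̂ᵢ,…,x_{k_u})` is encoded as
the pair of its source vertex `v(x₁,…,x_{k_u})` and the class containing `xᵢ`. -/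
def BSG.NewEdge (G : BSG) : Type :=
  Σ p : G.NewVert, {X : Set G.E // X ∈ G.C p.1}

/-- The edge `xᵢ ∈ E¹` attached to an edge `α^{xᵢ}(…)` of `(E₁,C¹)`. -/
def BSG.edgeOf (G : BSG) (e : G.NewEdge) : G.E := (e.1.2 e.2 : G.E)

/-- The class `X(x) = {α^{x}(…)} ⊆ E₁¹` attached to an edge `x ∈ E¹`. -/
def BSG.Xof (G : BSG) (x : G.E) : Set G.NewEdge := {e | G.edgeOf e = x}

/-- The finite bipartite separated graph `(E₁, C¹)` associated to `(E,C)`: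
`E₁^{0,0} = E^{0,1}`, `E₁^{0,1}` is the set of new vertices `v(x₁,…,x_{k_u})`, the
edge `α^{xᵢ}(…)` has source `v(x₁,…,x_{k_u})` and range `s(xᵢ)`, and
`C¹_w = {X(x) : x ∈ s⁻¹(w)}`. -/
def BSG.next (G : BSG) : BSG where
  V0 := G.V1
  V1 := G.NewVert
  E := G.NewEdge
  s := fun e => e.1
  r := fun e => G.s (G.edgeOf e)
  C := fun w => {S | ∃ x : G.E, G.s x = w ∧ S = G.Xof x}

/-- The canonical sequence `(E_n, C^n)` of finite bipartite separated graphs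
associated to `(E,C)`: `(E_0,C^0) = (E,C)` and `(E_{n+1},C^{n+1}) = ((E_n)₁,(C^n)¹)`. -/
def seqG (G : BSG) : ℕ → BSG
  | 0 => G
  | n + 1 => (seqG G n).next

/-- The defining relations of the graph monoid `M(E,C)` of a bipartite separated
graph. -/
def BipRel (H : BSG) {N : Type} [AddCommMonoid N] (a : H.V0 ⊕ H.V1 → N) : Prop :=
  ∀ v : H.V0, ∀ Y ∈ H.C v, a (Sum.inl v) = ∑ᶠ e ∈ Y, a (Sum.inr (H.s e))

/-- `(M, a)` is the graph monoid `M(E,C)` of the bipartite separated graph `H`. -/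
def IsBipGraphMonoid (H : BSG) {M : Type} [AddCommMonoid M] (a : H.V0 ⊕ H.V1 → M) : Prop :=
  BipRel H a ∧ ∀ (N : Type) [AddCommMonoid N] (b : H.V0 ⊕ H.V1 → N), BipRel H b →
    ∃! φ : M →+ N, ∀ p, φ (a p) = b p

/-- `(GM, ι)` is the universal (Grothendieck) group of the commutative monoid `M`. -/
def IsGroth {M GM : Type} [AddCommMonoid M] [AddCommGroup GM] (ι : M →+ GM) : Prop :=
  ∀ (H : Type) [AddCommGroup H] (f : M →+ H), ∃! φ : GM →+ H, φ.comp ι = f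

/-! ### Auxiliary material for the proof -/

noncomputable section AuxStep

open Finset

attribute [local instance] Classical.propDecidable

namespace BSGaux

/-- Any class of a valid separated graph is finite. -/
lemma class_unique {F : BSG} (hF : F.Valid) {u : F.V0} {X Y : Set F.E}
    (hX : X ∈ F.C u) (hY : Y ∈ F.C u) {x : F.E} (hx : x ∈ X) (hy : x ∈ Y) : X = Y := by
  by_contra hne
  exact Set.disjoint_left.1 (hF.disj u hX hY hne) hx hy

/-- Validity is preserved by passing to `(E₁, C¹)`. -/
lemma valid_next {F : BSG} (hF : F.Valid) : F.next.Valid := by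
  haveI := hF.finV0; haveI := hF.finV1; haveI := hF.finE
  constructor
  · exact hF.finV1
  · exact inferInstanceAs (Finite (Σ u : F.V0, (X : {X : Set F.E // X ∈ F.C u}) → ↥X.1))
  · haveI : Finite F.NewVert :=
      inferInstanceAs (Finite (Σ u : F.V0, (X : {X : Set F.E // X ∈ F.C u}) → ↥X.1))
    exact inferInstanceAs (Finite (Σ p : F.NewVert, {X : Set F.E // X ∈ F.C p.1}))
  · rintro v X ⟨x, hsx, rfl⟩ e he
    show F.s (F.edgeOf e) = v
    rw [he]; exact hsx
  · rintro v X ⟨x, hsx, rfl⟩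
    obtain ⟨X₀, hX₀, hxX₀⟩ := hF.cover x
    refine ⟨⟨⟨F.r x, Function.update (fun i => ⟨(hF.nonempty_class _ i.1 i.2).some,
      (hF.nonempty_class _ i.1 i.2).some_mem⟩) ⟨X₀, hX₀⟩ ⟨x, hxX₀⟩⟩, ⟨X₀, hX₀⟩⟩, ?_⟩
    show F.edgeOf _ = x
    simp [BSG.edgeOf, Function.update_self]
  · intro v
    rintro X ⟨x, hsx, rfl⟩ Y ⟨y, hsy, rfl⟩ hne
    refine Set.disjoint_left.2 fun e he1 he2 => hne ?_
    have : x = y := by rw [← he1, ← he2]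
    rw [this]
  · intro e
    exact ⟨F.Xof (F.edgeOf e), ⟨F.edgeOf e, rfl, rfl⟩, rfl⟩
  · intro w
    obtain ⟨x, hx⟩ := hF.s_surj w
    exact ⟨F.Xof x, x, hx, rfl⟩
  · intro p
    obtain ⟨X, hX⟩ := hF.C_nonempty p.1
    exact ⟨⟨p, ⟨X, hX⟩⟩, rfl⟩

lemma seq_valid {G : BSG} (hG : G.Valid) : ∀ n, (seqG G n).Valid
  | 0 => hG
  | n + 1 => valid_next (seq_valid hG n)

/-- Post-composing a `BipRel` family with an additive map. -/
lemma bipRel_comp {H : BSG} (hfin : ∀ (v : H.V0) (Y : Set H.E), Y ∈ H.C v → Y.Finite)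
    {N N' : Type} [AddCommMonoid N] [AddCommMonoid N'] {a : H.V0 ⊕ H.V1 → N}
    (f : N →+ N') (h : BipRel H a) : BipRel H (fun p => f (a p)) := by
  intro v Y hY
  have hfY := hfin v Y hY
  show f (a (Sum.inl v)) = _
  rw [h v Y hY, finsum_mem_eq_finite_toFinset_sum _ hfY,
    finsum_mem_eq_finite_toFinset_sum _ hfY, map_sum]

variable (F : BSG)

abbrev Ix (u : F.V0) : Type := {X : Set F.E // X ∈ F.C u}

abbrev Tup (u : F.V0) : Type := (X : Ix F u) → ↥X.1

section WithFintype

variable [Fintype F.E]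

/-- The chosen base point tuple. -/
def bp (hF : F.Valid) (u : F.V0) : Tup F u :=
  fun i => ⟨(hF.nonempty_class u i.1 i.2).some, (hF.nonempty_class u i.1 i.2).some_mem⟩

/-- Number of non-base coordinates. -/
def mdeg (hF : F.Valid) (u : F.V0) (t : Tup F u) : ℕ :=
  (Finset.univ.filter fun i => t i ≠ bp F hF u i).card

/-- The tuples whose `i`-th coordinate is `x`. -/
def Sfin (u : F.V0) (i : Ix F u) (x : ↥i.1) : Finset (Tup F u) :=
  Finset.univ.filter fun t => t i = x

/-- The element `σ⊗…⊗x⊗…⊗σ`. -/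
def sig (u : F.V0) (i : Ix F u) (x : ↥i.1) : Tup F u →₀ ℤ :=
  ∑ t ∈ Sfin F u i x, Finsupp.single t 1

/-- The element `σ⊗…⊗σ`. -/
def sigAll (u : F.V0) : Tup F u →₀ ℤ :=
  ∑ t : Tup F u, Finsupp.single t 1

lemma sig_def (u : F.V0) (i : Ix F u) (x : ↥i.1) :
    sig F u i x = ∑ t ∈ Sfin F u i x, Finsupp.single t 1 := rfl

lemma sigAll_def (u : F.V0) : sigAll F u = ∑ t : Tup F u, Finsupp.single t 1 := rfl

/-- The set indexing the free part. -/
def Wset (hF : F.Valid) : Set F.NewVert := {p | 2 ≤ mdeg F hF p.1 p.2}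

/-- Index of the basis adapted to the decomposition. -/
def IxB (hF : F.Valid) (u : F.V0) : Type :=
  (Σ i : Ix F u, {x : ↥i.1 // x ≠ bp F hF u i}) ⊕
    (Unit ⊕ {t : Tup F u // 2 ≤ mdeg F hF u t})

/-- The basis vectors. -/
def vec (hF : F.Valid) (u : F.V0) : IxB F hF u → (Tup F u →₀ ℤ)
  | .inl j => sig F u j.1 j.2.1
  | .inr (.inl _) => sigAll F u
  | .inr (.inr t) => Finsupp.single t.1 1

lemma sig_apply (u : F.V0) (i : Ix F u) (x : ↥i.1) (τ : Tup F u) :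
    sig F u i x τ = if τ i = x then 1 else 0 := by
  rw [sig, Finsupp.finset_sum_apply]
  simp only [Sfin]
  by_cases h : τ i = x
  · rw [if_pos h, Finset.sum_eq_single_of_mem τ (Finset.mem_filter.2 ⟨Finset.mem_univ τ, h⟩)]
    · exact Finsupp.single_eq_same
    · intro t _ hne; exact Finsupp.single_eq_of_ne' hne
  · rw [if_neg h]
    apply Finset.sum_eq_zero
    intro t ht
    have hne : t ≠ τ := by
      rintro rfl
      simp only [mem_filter, mem_univ, true_and] at ht
      exact h ht
    exact Finsupp.single_eq_of_ne' hne

lemma sigAll_apply (u : F.V0) (τ : Tup F u) : sigAll F u τ = 1 := by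
  rw [sigAll, Finsupp.finset_sum_apply,
    Finset.sum_eq_single_of_mem τ (Finset.mem_univ τ)]
  · exact Finsupp.single_eq_same
  · intro t _ hne; exact Finsupp.single_eq_of_ne' hne

lemma sum_sig (u : F.V0) (i : Ix F u) :
    ∑ x : ↥i.1, sig F u i x = sigAll F u := by
  rw [sigAll]
  rw [← Finset.sum_fiberwise_of_maps_to (g := fun t : Tup F u => t i)
    (fun t _ => Finset.mem_univ (t i)) (fun t => Finsupp.single t (1:ℤ))]
  rfl

lemma mdeg_eq_zero_iff (hF : F.Valid) (u : F.V0) (t : Tup F u) :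
    mdeg F hF u t = 0 ↔ t = bp F hF u := by
  rw [mdeg, Finset.card_eq_zero, Finset.filter_eq_empty_iff]
  constructor
  · intro h; funext i
    by_contra hne
    exact h (Finset.mem_univ i) hne
  · intro h i _ hne
    exact hne (by rw [h])

lemma two_le_mdeg (hF : F.Valid) (u : F.V0) {t : Tup F u} {i j : Ix F u} (hij : i ≠ j)
    (hi : t i ≠ bp F hF u i) (hj : t j ≠ bp F hF u j) : 2 ≤ mdeg F hF u t := by
  have hsub : ({i, j} : Finset (Ix F u)) ⊆ Finset.univ.filter fun k => t k ≠ bp F hF u k := by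
    intro k hk
    rcases Finset.mem_insert.1 hk with rfl | hk
    · exact Finset.mem_filter.2 ⟨Finset.mem_univ _, hi⟩
    · rw [Finset.mem_singleton.1 hk]
      exact Finset.mem_filter.2 ⟨Finset.mem_univ _, hj⟩
  calc 2 = ({i, j} : Finset (Ix F u)).card := (Finset.card_pair hij).symm
  _ ≤ _ := Finset.card_le_card hsub

lemma eq_bp_of_le_one (hF : F.Valid) (u : F.V0) {t : Tup F u} (hmd : mdeg F hF u t ≤ 1)
    {i : Ix F u} (hi : t i ≠ bp F hF u i) {j : Ix F u} (hj : j ≠ i) : t j = bp F hF u j := by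
  by_contra hne
  exact absurd (le_trans (two_le_mdeg F hF u (Ne.symm hj) hi hne) hmd) (by norm_num)

lemma mdeg_update_le (hF : F.Valid) (u : F.V0) (i : Ix F u) (x : ↥i.1) :
    mdeg F hF u (Function.update (bp F hF u) i x) ≤ 1 := by
  calc mdeg F hF u (Function.update (bp F hF u) i x)
      ≤ ({i} : Finset (Ix F u)).card := by
        apply Finset.card_le_card
        intro j hj
        obtain ⟨-, hj⟩ := Finset.mem_filter.1 hj
        rcases eq_or_ne j i with rfl | hne
        · exact Finset.mem_singleton_self j
        · exact absurd (Function.update_of_ne hne _ _) hj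
    _ = 1 := Finset.card_singleton i

lemma vec_li (hF : F.Valid) (u : F.V0) : LinearIndependent ℤ (vec F hF u) := by
  rw [linearIndependent_iff']
  intro s gc hsum
  have heval : ∀ τ : Tup F u, ∑ j ∈ s, gc j * (vec F hF u j τ) = 0 := by
    intro τ
    have h := congrArg (fun f : Tup F u →₀ ℤ => f τ) hsum
    simpa only [Finsupp.finset_sum_apply, Finsupp.smul_apply, smul_eq_mul,
      Finsupp.coe_zero, Pi.zero_apply] using h
  have hmdeg2_ne_bp : ∀ t : {t : Tup F u // 2 ≤ mdeg F hF u t}, t.1 ≠ bp F hF u := by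
    intro t ht
    have := (mdeg_eq_zero_iff F hF u t.1).2 ht
    omega
  have hunit : Sum.inr (Sum.inl ()) ∈ s → gc (Sum.inr (Sum.inl ())) = 0 := by
    intro hmem
    have hz : ∀ j ∈ s, j ≠ Sum.inr (Sum.inl ()) →
        gc j * (vec F hF u j) (bp F hF u) = 0 := by
      rintro (⟨i, x⟩ | (⟨⟩ | t)) _ hne
      · have : bp F hF u i ≠ x.1 := fun h => x.2 h.symm
        simp [vec, sig_apply, this]
      · exact absurd rfl hne
      · rw [vec, Finsupp.single_eq_of_ne' (hmdeg2_ne_bp t), mul_zero]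
    have h0 : gc (Sum.inr (Sum.inl ())) * (vec F hF u (Sum.inr (Sum.inl ()))) (bp F hF u) = 0 := by
      rw [← Finset.sum_eq_single_of_mem _ hmem hz]
      exact heval _
    simpa only [vec, sigAll_apply, mul_one] using h0
  have hsig : ∀ (j : Σ i : Ix F u, {x : ↥i.1 // x ≠ bp F hF u i}),
      Sum.inl j ∈ s → gc (Sum.inl j) = 0 := by
    rintro ⟨i, x⟩ hmem
    set τ := Function.update (bp F hF u) i x.1 with hτ
    have hτi : τ i = x.1 := Function.update_self _ _ _
    have hz : ∀ j ∈ s, j ≠ Sum.inl ⟨i, x⟩ → gc j * (vec F hF u j) τ = 0 := by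
      rintro (⟨i', x'⟩ | (⟨⟩ | t)) hmem' hne
      · rcases eq_or_ne i' i with rfl | hii
        · have hxx : τ i' ≠ x'.1 := by
            rw [hτi]
            intro h
            exact hne (by rw [Subtype.ext h])
          simp [vec, sig_apply, hxx]
        · have : τ i' ≠ x'.1 := by
            rw [hτ, Function.update_of_ne hii]
            exact fun h => x'.2 h.symm
          simp [vec, sig_apply, this]
      · rw [show gc (Sum.inr (Sum.inl ())) = 0 from hunit hmem', zero_mul]
      · have : t.1 ≠ τ := by
          intro h
          have := mdeg_update_le F hF u i x.1
          rw [← hτ, ← h] at this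
          omega
        rw [vec, Finsupp.single_eq_of_ne' this, mul_zero]
    have h0 : gc (Sum.inl ⟨i, x⟩) * (vec F hF u (Sum.inl ⟨i, x⟩)) τ = 0 := by
      rw [← Finset.sum_eq_single_of_mem _ hmem hz]
      exact heval _
    simpa [vec, sig_apply, hτi] using h0
  have hw : ∀ (t : {t : Tup F u // 2 ≤ mdeg F hF u t}),
      Sum.inr (Sum.inr t) ∈ s → gc (Sum.inr (Sum.inr t)) = 0 := by
    intro t hmem
    have hz : ∀ j ∈ s, j ≠ Sum.inr (Sum.inr t) → gc j * (vec F hF u j) t.1 = 0 := by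
      rintro (⟨i', x'⟩ | (⟨⟩ | t')) hmem' hne
      · rw [show gc (Sum.inl ⟨i', x'⟩) = 0 from hsig _ hmem', zero_mul]
      · rw [show gc (Sum.inr (Sum.inl ())) = 0 from hunit hmem', zero_mul]
      · have : t'.1 ≠ t.1 := fun h => hne (by rw [Subtype.ext h])
        rw [vec, Finsupp.single_eq_of_ne' this, mul_zero]
    have h0 : gc (Sum.inr (Sum.inr t)) * (vec F hF u (Sum.inr (Sum.inr t))) t.1 = 0 := by
      rw [← Finset.sum_eq_single_of_mem _ hmem hz]
      exact heval _
    simpa only [vec, Finsupp.single_eq_same, mul_one] using h0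
  rintro (j | (⟨⟩ | t)) hj
  · exact hsig j hj
  · exact hunit hj
  · exact hw t hj

lemma single_mem_span (hF : F.Valid) (u : F.V0) (t : Tup F u) :
    Finsupp.single t (1:ℤ) ∈ Submodule.span ℤ (Set.range (vec F hF u)) := by
  set Sp := Submodule.span ℤ (Set.range (vec F hF u)) with hSp
  have h2 : ∀ t' : Tup F u, 2 ≤ mdeg F hF u t' → Finsupp.single t' (1:ℤ) ∈ Sp := fun t' h =>
    Submodule.subset_span ⟨Sum.inr (Sum.inr ⟨t', h⟩), rfl⟩
  have hsig_mem : ∀ (i : Ix F u) (x : ↥i.1), x ≠ bp F hF u i → sig F u i x ∈ Sp :=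
    fun i x hx => Submodule.subset_span ⟨Sum.inl ⟨i, ⟨x, hx⟩⟩, rfl⟩
  have hdec : ∀ (i : Ix F u) (t' : Tup F u),
      Finsupp.single t' (1:ℤ) = sig F u i (t' i)
        - ∑ t'' ∈ (Sfin F u i (t' i)).erase t', Finsupp.single t'' 1 := by
    intro i t'
    rw [sig, ← Finset.add_sum_erase _ _
      (show t' ∈ Sfin F u i (t' i) from Finset.mem_filter.2 ⟨Finset.mem_univ _, rfl⟩)]
    abel
  have h1 : ∀ t' : Tup F u, mdeg F hF u t' = 1 → Finsupp.single t' (1:ℤ) ∈ Sp := by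
    intro t' hm
    obtain ⟨i, hi⟩ : ∃ i, t' i ≠ bp F hF u i := by
      by_contra hc
      push_neg at hc
      rw [(mdeg_eq_zero_iff F hF u t').2 (funext hc)] at hm
      omega
    rw [hdec i t']
    refine Submodule.sub_mem _ (hsig_mem i _ hi) (Submodule.sum_mem _ fun t'' ht'' => ?_)
    obtain ⟨hne, hmem⟩ := Finset.mem_erase.1 ht''
    have ht''i : t'' i = t' i := (Finset.mem_filter.1 hmem).2
    refine h2 _ ?_
    by_contra hlt
    push_neg at hlt
    apply hne
    funext j
    rcases eq_or_ne j i with rfl | hji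
    · exact ht''i
    · rw [eq_bp_of_le_one F hF u (Nat.lt_succ_iff.1 hlt) (ht''i ▸ hi) hji,
        eq_bp_of_le_one F hF u (le_of_eq hm) hi hji]
  have h0 : Finsupp.single (bp F hF u) (1:ℤ) ∈ Sp := by
    obtain ⟨X, hX⟩ := hF.C_nonempty u
    set i₀ : Ix F u := ⟨X, hX⟩
    have hsig_bp : sig F u i₀ (bp F hF u i₀) ∈ Sp := by
      have hsum : sig F u i₀ (bp F hF u i₀) = sigAll F u
          - ∑ x ∈ Finset.univ.erase (bp F hF u i₀), sig F u i₀ x := by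
        rw [← sum_sig F u i₀, ← Finset.add_sum_erase _ _ (Finset.mem_univ (bp F hF u i₀))]
        abel
      rw [hsum]
      exact Submodule.sub_mem _ (Submodule.subset_span ⟨Sum.inr (Sum.inl ()), rfl⟩)
        (Submodule.sum_mem _ fun x hx =>
          Submodule.subset_span ⟨Sum.inl ⟨i₀, ⟨x, (Finset.mem_erase.1 hx).1⟩⟩, rfl⟩)
    have := hdec i₀ (bp F hF u)
    rw [this]
    refine Submodule.sub_mem _ hsig_bp (Submodule.sum_mem _ fun t'' ht'' => ?_)
    obtain ⟨hne, hmem⟩ := Finset.mem_erase.1 ht''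
    rcases Nat.lt_or_ge (mdeg F hF u t'') 2 with hlt | hge
    · interval_cases h : mdeg F hF u t''
      · exact absurd ((mdeg_eq_zero_iff F hF u t'').1 h) hne
      · exact h1 _ h
    · exact h2 _ hge
  rcases Nat.lt_or_ge (mdeg F hF u t) 2 with hlt | hge
  · interval_cases h : mdeg F hF u t
    · rw [(mdeg_eq_zero_iff F hF u t).1 h]; exact h0
    · exact h1 _ h
  · exact h2 _ hge

lemma vec_span (hF : F.Valid) (u : F.V0) :
    ⊤ ≤ Submodule.span ℤ (Set.range (vec F hF u)) := by
  intro f _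
  induction f using Finsupp.induction with
  | zero => exact Submodule.zero_mem _
  | single_add t k f _ _ ih =>
    refine Submodule.add_mem _ ?_ (ih Submodule.mem_top)
    have : Finsupp.single t k = k • Finsupp.single t (1:ℤ) := by
      rw [Finsupp.smul_single, smul_eq_mul, mul_one]
    rw [this]
    exact Submodule.smul_mem _ _ (single_mem_span F hF u t)

/-- The basis of `ℤ^{Tup u}` adapted to the splitting. -/
def basis (hF : F.Valid) (u : F.V0) : Module.Basis (IxB F hF u) ℤ (Tup F u →₀ ℤ) :=
  Module.Basis.mk (vec_li F hF u) (vec_span F hF u)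

end WithFintype

section Step

variable {Gn Gn1 : Type} [AddCommGroup Gn] [AddCommGroup Gn1]

variable [Fintype F.E]

/-- Reindexing a sum over the class `X(x)` by the tuples whose `i`-th entry is `x`. -/
lemma sum_Xof (hF : F.Valid) {β : Type} [AddCommMonoid β] (f : F.NewVert → β)
    (u : F.V0) (i : Ix F u) (x : ↥i.1) (hr : F.r x.1 = u)
    {s : Finset F.NewEdge} (hs : ∀ e, e ∈ s ↔ F.edgeOf e = x.1) :
    ∑ t ∈ Sfin F u i x, f ⟨u, t⟩ = ∑ e ∈ s, f e.1 := by
  refine Finset.sum_bij (fun t _ => (⟨⟨u, t⟩, i⟩ : F.NewEdge)) ?_ ?_ ?_ ?_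
  · intro t ht
    refine (hs _).2 ?_
    show ((t i : ↥i.1) : F.E) = x.1
    rw [(Finset.mem_filter.1 ht).2]
  · intro t₁ h₁ t₂ h₂ h
    have := congrArg Sigma.fst h
    exact eq_of_heq (Sigma.mk.inj_iff.1 this).2
  · rintro ⟨⟨u', t'⟩, i'⟩ he
    replace he := (hs _).1 he
    have h1 : F.r ((t' i' : ↥i'.1) : F.E) = u' := hF.mem_r u' i'.1 i'.2 _ (t' i').2
    rw [show ((t' i' : ↥i'.1) : F.E) = x.1 from he] at h1
    have hu : u' = u := h1.symm.trans hr
    subst hu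
    have hii : i' = i := Subtype.ext (class_unique hF i'.2 i.2 (he ▸ (t' i').2) x.2)
    subst hii
    exact ⟨t', Finset.mem_filter.2 ⟨Finset.mem_univ _, Subtype.ext he⟩, rfl⟩
  · intro t _
    rfl

/-- Values of the retraction `π` on the basis. -/
def pival (hF : F.Valid) (av : F.V0 ⊕ F.V1 → Gn) (u : F.V0) : IxB F hF u → Gn
  | .inl j => av (Sum.inr (F.s j.2.1.1))
  | .inr (.inl _) => av (Sum.inl u)
  | .inr (.inr _) => 0

/-- Values of the projection `q` on the basis. -/
def qval (hF : F.Valid) (u : F.V0) : IxB F hF u → (↥(Wset F hF) →₀ ℤ)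
  | .inl _ => 0
  | .inr (.inl _) => 0
  | .inr (.inr t) => Finsupp.single ⟨⟨u, t.1⟩, t.2⟩ 1

/-- The retraction `π : ℤ^{Tup u} → G_n`. -/
def piMap (hF : F.Valid) (av : F.V0 ⊕ F.V1 → Gn) (u : F.V0) :
    (Tup F u →₀ ℤ) →ₗ[ℤ] Gn :=
  (Finsupp.linearCombination ℤ (pival F hF av u)).comp (basis F hF u).repr.toLinearMap

/-- The projection `q : ℤ^{Tup u} → ℤ^{W}`. -/
def qMap (hF : F.Valid) (u : F.V0) :
    (Tup F u →₀ ℤ) →ₗ[ℤ] (↥(Wset F hF) →₀ ℤ) :=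
  (Finsupp.linearCombination ℤ (qval F hF u)).comp (basis F hF u).repr.toLinearMap

lemma piMap_vec (hF : F.Valid) (av : F.V0 ⊕ F.V1 → Gn) (u : F.V0) (j : IxB F hF u) :
    piMap F hF av u (vec F hF u j) = pival F hF av u j := by
  rw [piMap, LinearMap.comp_apply, ← Module.Basis.mk_apply (vec_li F hF u) (vec_span F hF u)]
  rw [LinearEquiv.coe_toLinearMap]
  rw [show Module.Basis.mk (vec_li F hF u) (vec_span F hF u) = basis F hF u from rfl]
  rw [Module.Basis.repr_self, Finsupp.linearCombination_single, one_smul]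

lemma qMap_vec (hF : F.Valid) (u : F.V0) (j : IxB F hF u) :
    qMap F hF u (vec F hF u j) = qval F hF u j := by
  rw [qMap, LinearMap.comp_apply, ← Module.Basis.mk_apply (vec_li F hF u) (vec_span F hF u)]
  rw [LinearEquiv.coe_toLinearMap]
  rw [show Module.Basis.mk (vec_li F hF u) (vec_span F hF u) = basis F hF u from rfl]
  rw [Module.Basis.repr_self, Finsupp.linearCombination_single, one_smul]

/-- The class-sum relation, in subtype-sum form. -/
lemma K4 (hF : F.Valid) {av : F.V0 ⊕ F.V1 → Gn} (hrel : BipRel F av) (u : F.V0) (i : Ix F u) :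
    av (Sum.inl u) = ∑ x : ↥i.1, av (Sum.inr (F.s x.1)) := by
  have h := hrel u i.1 i.2
  rw [finsum_mem_eq_finite_toFinset_sum _ (Set.toFinite i.1)] at h
  rw [h, Finset.sum_subtype _ (fun x => (Set.toFinite i.1).mem_toFinset) fun e => av (Sum.inr (F.s e))]

lemma sig_bp_eq (hF : F.Valid) (u : F.V0) (i : Ix F u) :
    sig F u i (bp F hF u i) = sigAll F u
      - ∑ x ∈ Finset.univ.erase (bp F hF u i), sig F u i x := by
  rw [← sum_sig F u i, ← Finset.add_sum_erase _ _ (Finset.mem_univ (bp F hF u i))]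
  abel

lemma piMap_sig (hF : F.Valid) {av : F.V0 ⊕ F.V1 → Gn} (hrel : BipRel F av) (u : F.V0)
    (i : Ix F u) (x : ↥i.1) :
    piMap F hF av u (sig F u i x) = av (Sum.inr (F.s x.1)) := by
  rcases eq_or_ne x (bp F hF u i) with rfl | hx
  · rw [sig_bp_eq F hF u i, map_sub, map_sum]
    have h1 : piMap F hF av u (sigAll F u) = av (Sum.inl u) :=
      piMap_vec F hF av u (Sum.inr (Sum.inl ()))
    have h2 : ∀ y ∈ Finset.univ.erase (bp F hF u i),
        piMap F hF av u (sig F u i y) = av (Sum.inr (F.s y.1)) := fun y hy =>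
      piMap_vec F hF av u (Sum.inl ⟨i, ⟨y, (Finset.mem_erase.1 hy).1⟩⟩)
    rw [h1, Finset.sum_congr rfl h2, K4 F hF hrel u i,
      ← Finset.add_sum_erase _ (fun y : ↥i.1 => av (Sum.inr (F.s y.1))) (Finset.mem_univ (bp F hF u i))]
    abel
  · exact piMap_vec F hF av u (Sum.inl ⟨i, ⟨x, hx⟩⟩)

lemma qMap_sig (hF : F.Valid) (u : F.V0) (i : Ix F u) (x : ↥i.1) :
    qMap F hF u (sig F u i x) = 0 := by
  rcases eq_or_ne x (bp F hF u i) with rfl | hx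
  · rw [sig_bp_eq F hF u i, map_sub, map_sum]
    have h1 : qMap F hF u (sigAll F u) = 0 := qMap_vec F hF u (Sum.inr (Sum.inl ()))
    have h2 : ∀ y ∈ Finset.univ.erase (bp F hF u i),
        qMap F hF u (sig F u i y) = 0 := fun y hy =>
      qMap_vec F hF u (Sum.inl ⟨i, ⟨y, (Finset.mem_erase.1 hy).1⟩⟩)
    rw [h1, Finset.sum_congr rfl h2]
    simp
  · exact qMap_vec F hF u (Sum.inl ⟨i, ⟨x, hx⟩⟩)

/-- The lift `ℤ^W → G_{n+1}`. -/
def liftZ (hF : F.Valid) (av1 : F.next.V0 ⊕ F.next.V1 → Gn1) :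
    (↥(Wset F hF) →₀ ℤ) →+ Gn1 :=
  Finsupp.liftAddHom (fun w => zmultiplesHom Gn1 (av1 (Sum.inr w.1)))

lemma K3 (hF : F.Valid) {av1 : F.next.V0 ⊕ F.next.V1 → Gn1} (hrel1 : BipRel F.next av1)
    (u : F.V0) (i : Ix F u) (x : ↥i.1) :
    av1 (Sum.inl (F.s x.1)) = ∑ t ∈ Sfin F u i x, av1 (Sum.inr ⟨u, t⟩) := by
  haveI := hF.finV0
  haveI : Finite F.NewVert :=
    inferInstanceAs (Finite (Σ u : F.V0, (X : {X : Set F.E // X ∈ F.C u}) → ↥X.1))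
  haveI : Finite F.NewEdge :=
    inferInstanceAs (Finite (Σ p : F.NewVert, {X : Set F.E // X ∈ F.C p.1}))
  have hXmem : F.Xof x.1 ∈ F.next.C (F.s x.1) := ⟨x.1, rfl, rfl⟩
  have h : av1 (Sum.inl (F.s x.1)) =
      ∑ᶠ e ∈ F.Xof x.1, av1 (Sum.inr (e : F.NewEdge).1) := hrel1 (F.s x.1) _ hXmem
  rw [finsum_mem_eq_finite_toFinset_sum _ (Set.toFinite (F.Xof x.1))] at h
  rw [h, ← sum_Xof F hF (fun p => av1 (Sum.inr p)) u i x
    (hF.mem_r u i.1 i.2 _ x.2) (fun e => (Set.toFinite (F.Xof x.1)).mem_toFinset)]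

/-- Equality of the two maps `ℤ^{Tup u} → G_{n+1}`: the key "R4" computation. -/
lemma thetaEq (hF : F.Valid) {av : F.V0 ⊕ F.V1 → Gn} {av1 : F.next.V0 ⊕ F.next.V1 → Gn1}
    (hrel : BipRel F av) (hrel1 : BipRel F.next av1) (g : Gn →+ Gn1)
    (hg0 : ∀ u : F.V0, g (av (Sum.inl u)) =
      ∑ᶠ t : (X : {X : Set F.E // X ∈ F.C u}) → ↥X.1, av1 (Sum.inr ⟨u, t⟩))
    (hg1 : ∀ w : F.V1, g (av (Sum.inr w)) = av1 (Sum.inl w)) (u : F.V0) (τ : Tup F u →₀ ℤ) :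
    g (piMap F hF av u τ) + liftZ F hF av1 (qMap F hF u τ) =
      Finsupp.linearCombination ℤ (fun t : Tup F u => av1 (Sum.inr ⟨u, t⟩)) τ := by
  have hbasis : ∀ j : IxB F hF u, basis F hF u j = vec F hF u j :=
    Module.Basis.mk_apply (vec_li F hF u) (vec_span F hF u)
  have hlift1 : ∀ (w : ↥(Wset F hF)), liftZ F hF av1 (Finsupp.single w 1) = av1 (Sum.inr w.1) := by
    intro w
    rw [liftZ, Finsupp.liftAddHom_apply_single, zmultiplesHom_apply, one_smul]
  have hlc : ∀ s : Finset (Tup F u),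
      Finsupp.linearCombination ℤ (fun t : Tup F u => av1 (Sum.inr ⟨u, t⟩))
        (∑ t ∈ s, Finsupp.single t (1:ℤ)) = ∑ t ∈ s, av1 (Sum.inr ⟨u, t⟩) := by
    intro s
    rw [map_sum]
    exact Finset.sum_congr rfl fun t _ => by
      rw [Finsupp.linearCombination_single, one_smul]
  have key : g.toIntLinearMap.comp (piMap F hF av u)
      + (liftZ F hF av1).toIntLinearMap.comp (qMap F hF u)
      = Finsupp.linearCombination ℤ (fun t : Tup F u => av1 (Sum.inr ⟨u, t⟩)) := by
    apply Module.Basis.ext (basis F hF u)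
    intro j
    rw [hbasis j]
    rcases j with j | (⟨⟩ | t)
    · -- σ(x) vectors
      obtain ⟨i, x⟩ := j
      show g (piMap F hF av u (sig F u i x.1)) + liftZ F hF av1 (qMap F hF u (sig F u i x.1)) = _
      rw [piMap_sig F hF hrel u i x.1, qMap_sig F hF u i x.1, map_zero, add_zero,
        hg1 (F.s x.1.1), K3 F hF hrel1 u i x.1,
        show vec F hF u (Sum.inl ⟨i, x⟩) = sig F u i x.1 from rfl, sig_def, hlc]
    · -- the vector Σ̂
      show g (piMap F hF av u (sigAll F u)) + liftZ F hF av1 (qMap F hF u (sigAll F u)) = _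
      rw [show piMap F hF av u (sigAll F u) = av (Sum.inl u) from
          piMap_vec F hF av u (Sum.inr (Sum.inl ())),
        show qMap F hF u (sigAll F u) = 0 from qMap_vec F hF u (Sum.inr (Sum.inl ())),
        map_zero, add_zero, hg0 u,
        show vec F hF u (Sum.inr (Sum.inl ())) = sigAll F u from rfl, sigAll_def, hlc,
        finsum_eq_sum_of_fintype (fun t : Tup F u => av1 (Sum.inr ⟨u, t⟩))]
    · -- the W vectors
      show g (piMap F hF av u (Finsupp.single t.1 1))
          + liftZ F hF av1 (qMap F hF u (Finsupp.single t.1 1)) = _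
      rw [show piMap F hF av u (Finsupp.single t.1 1) = 0 from
          piMap_vec F hF av u (Sum.inr (Sum.inr t)),
        show qMap F hF u (Finsupp.single t.1 1) = Finsupp.single ⟨⟨u, t.1⟩, t.2⟩ 1 from
          qMap_vec F hF u (Sum.inr (Sum.inr t)),
        map_zero, zero_add,
        show vec F hF u (Sum.inr (Sum.inr t)) = Finsupp.single t.1 1 from rfl,
        Finsupp.linearCombination_single, one_smul]
      exact hlift1 ⟨⟨u, t.1⟩, t.2⟩
  exact LinearMap.congr_fun key τ


/-- The family of values defining `ψ : G_{n+1} → G_n × ℤ^W`. -/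
def bfam (hF : F.Valid) (av : F.V0 ⊕ F.V1 → Gn) :
    F.next.V0 ⊕ F.next.V1 → Gn × (↥(Wset F hF) →₀ ℤ)
  | .inl w => (av (Sum.inr w), 0)
  | .inr p => (piMap F hF av p.1 (Finsupp.single p.2 1), qMap F hF p.1 (Finsupp.single p.2 1))

lemma sum_bfam (hF : F.Valid) (av : F.V0 ⊕ F.V1 → Gn) (u : F.V0) (s : Finset (Tup F u)) :
    ∑ t ∈ s, bfam F hF av (Sum.inr ⟨u, t⟩) =
      (piMap F hF av u (∑ t ∈ s, Finsupp.single t 1),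
        qMap F hF u (∑ t ∈ s, Finsupp.single t 1)) := by
  have h : ∀ t ∈ s, bfam F hF av (Sum.inr ⟨u, t⟩) =
      (piMap F hF av u (Finsupp.single t 1), qMap F hF u (Finsupp.single t 1)) :=
    fun t _ => rfl
  rw [Finset.sum_congr rfl h, map_sum, map_sum]
  exact Prod.ext (by rw [Prod.fst_sum]) (by rw [Prod.snd_sum])

lemma bfam_rel (hF : F.Valid) {av : F.V0 ⊕ F.V1 → Gn} (hrel : BipRel F av) :
    BipRel F.next (bfam F hF av) := by
  haveI := hF.finV0
  haveI : Finite F.NewVert :=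
    inferInstanceAs (Finite (Σ u : F.V0, (X : {X : Set F.E // X ∈ F.C u}) → ↥X.1))
  haveI : Finite F.NewEdge :=
    inferInstanceAs (Finite (Σ p : F.NewVert, {X : Set F.E // X ∈ F.C p.1}))
  rintro w Y ⟨x, hsx, rfl⟩
  obtain ⟨X, hX, hxX⟩ := hF.cover x
  show bfam F hF av (Sum.inl w) = ∑ᶠ e ∈ F.Xof x, bfam F hF av (Sum.inr (e : F.NewEdge).1)
  rw [finsum_mem_eq_finite_toFinset_sum _ (Set.toFinite (F.Xof x))]
  rw [← sum_Xof F hF (fun p => bfam F hF av (Sum.inr p)) (F.r x) ⟨X, hX⟩ ⟨x, hxX⟩ rfl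
    (fun e => (Set.toFinite (F.Xof x)).mem_toFinset)]
  rw [sum_bfam, ← sig_def, piMap_sig F hF hrel (F.r x) ⟨X, hX⟩ ⟨x, hxX⟩,
    qMap_sig F hF (F.r x) ⟨X, hX⟩ ⟨x, hxX⟩]
  subst hsx
  rfl

end Step

/-- The key one-step splitting: `G_{n+1} ≅ G_n ⊕ ℤ^W` compatibly with `g`. -/
theorem step_iso (F₀ : BSG) (hF : F₀.Valid)
    {Gn Gn1 : Type} [AddCommGroup Gn] [AddCommGroup Gn1]
    (av : F₀.V0 ⊕ F₀.V1 → Gn) (av1 : F₀.next.V0 ⊕ F₀.next.V1 → Gn1)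
    (hrel : BipRel F₀ av) (hrel1 : BipRel F₀.next av1)
    (hup : ∀ (H : Type) [AddCommGroup H] (b : F₀.V0 ⊕ F₀.V1 → H), BipRel F₀ b →
        ∃! Φ : Gn →+ H, ∀ p, Φ (av p) = b p)
    (hup1 : ∀ (H : Type) [AddCommGroup H] (b : F₀.next.V0 ⊕ F₀.next.V1 → H), BipRel F₀.next b →
        ∃! Φ : Gn1 →+ H, ∀ p, Φ (av1 p) = b p)
    (g : Gn →+ Gn1)
    (hg0 : ∀ u : F₀.V0, g (av (Sum.inl u)) =
      ∑ᶠ t : (X : {X : Set F₀.E // X ∈ F₀.C u}) → ↥X.1, av1 (Sum.inr ⟨u, t⟩))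
    (hg1 : ∀ w : F₀.V1, g (av (Sum.inr w)) = av1 (Sum.inl w)) :
    ∃ (Wn : Set F₀.NewVert) (e : Gn1 ≃+ Gn × (↥Wn →₀ ℤ)),
      ∀ x : Gn, e (g x) = (x, 0) := by
  haveI := hF.finE
  letI : Fintype F₀.E := Fintype.ofFinite _
  obtain ⟨ψ, hψ, hψu⟩ :=
    hup1 (Gn × (↥(Wset F₀ hF) →₀ ℤ)) (bfam F₀ hF av) (bfam_rel F₀ hF hrel)
  set φinv : Gn × (↥(Wset F₀ hF) →₀ ℤ) →+ Gn1 := g.coprod (liftZ F₀ hF av1) with hφinv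
  have hR4 : ∀ p : F₀.NewVert, φinv (bfam F₀ hF av (Sum.inr p)) = av1 (Sum.inr p) := by
    intro p
    rw [hφinv, AddMonoidHom.coprod_apply]
    have h := thetaEq F₀ hF hrel hrel1 g hg0 hg1 p.1 (Finsupp.single p.2 1)
    rw [Finsupp.linearCombination_single, one_smul] at h
    exact h
  have hE1 : ∀ y : Gn1, φinv (ψ y) = y := by
    have h1 : ∀ p, (φinv.comp ψ) (av1 p) = av1 p := by
      rintro (w | p)
      · rw [AddMonoidHom.comp_apply, hψ (Sum.inl w)]
        show g (av (Sum.inr w)) + liftZ F₀ hF av1 0 = _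
        rw [map_zero, add_zero]
        exact hg1 w
      · rw [AddMonoidHom.comp_apply, hψ (Sum.inr p)]
        exact hR4 p
    obtain ⟨Φ₀, -, hΦu⟩ := hup1 Gn1 av1 hrel1
    have e1 := hΦu (φinv.comp ψ) h1
    have e2 := hΦu (AddMonoidHom.id Gn1) (fun p => rfl)
    intro y
    exact DFunLike.congr_fun (e1.trans e2.symm) y
  have hE3 : ∀ x : Gn, ψ (g x) = (x, 0) := by
    have hb0 : BipRel F₀ (fun p => (AddMonoidHom.inl Gn (↥(Wset F₀ hF) →₀ ℤ)) (av p)) :=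
      bipRel_comp (fun v Y _ => Set.toFinite Y) _ hrel
    have h1 : ∀ p, (ψ.comp g) (av p) =
        (AddMonoidHom.inl Gn (↥(Wset F₀ hF) →₀ ℤ)) (av p) := by
      rintro (u | w)
      · rw [AddMonoidHom.comp_apply, hg0 u,
          finsum_eq_sum_of_fintype (fun t : Tup F₀ u => av1 (Sum.inr ⟨u, t⟩)), map_sum]
        have hterm : ∀ t : Tup F₀ u, ψ (av1 (Sum.inr ⟨u, t⟩)) = bfam F₀ hF av (Sum.inr ⟨u, t⟩) :=
          fun t => hψ (Sum.inr ⟨u, t⟩)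
        rw [Finset.sum_congr rfl (fun t _ => hterm t), sum_bfam, ← sigAll_def,
          show piMap F₀ hF av u (sigAll F₀ u) = av (Sum.inl u) from
            piMap_vec F₀ hF av u (Sum.inr (Sum.inl ())),
          show qMap F₀ hF u (sigAll F₀ u) = 0 from qMap_vec F₀ hF u (Sum.inr (Sum.inl ())),
          AddMonoidHom.inl_apply]
      · rw [AddMonoidHom.comp_apply, hg1 w, hψ (Sum.inl w), AddMonoidHom.inl_apply]
        rfl
    obtain ⟨Φ₀, -, hΦu⟩ := hup (Gn × (↥(Wset F₀ hF) →₀ ℤ))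
      (fun p => (AddMonoidHom.inl Gn (↥(Wset F₀ hF) →₀ ℤ)) (av p)) hb0
    have e1 := hΦu (ψ.comp g) h1
    have e2 := hΦu (AddMonoidHom.inl Gn (↥(Wset F₀ hF) →₀ ℤ)) (fun p => rfl)
    intro x
    have := DFunLike.congr_fun (e1.trans e2.symm) x
    rw [AddMonoidHom.comp_apply] at this
    rw [this, AddMonoidHom.inl_apply]
  have hliftsingle : ∀ (w : ↥(Wset F₀ hF)),
      ψ (liftZ F₀ hF av1 (Finsupp.single w 1)) = ((0 : Gn), Finsupp.single w (1:ℤ)) := by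
    intro w
    have h2 : liftZ F₀ hF av1 (Finsupp.single w 1) = av1 (Sum.inr w.1) := by
      rw [liftZ, Finsupp.liftAddHom_apply_single, zmultiplesHom_apply, one_smul]
    rw [h2, hψ (Sum.inr w.1)]
    have hmem : 2 ≤ mdeg F₀ hF w.1.1 w.1.2 := w.2
    show (piMap F₀ hF av w.1.1 (Finsupp.single w.1.2 1),
      qMap F₀ hF w.1.1 (Finsupp.single w.1.2 1)) = _
    rw [show (Finsupp.single w.1.2 (1:ℤ)) =
        vec F₀ hF w.1.1 (Sum.inr (Sum.inr ⟨w.1.2, hmem⟩)) from rfl,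
      ]
    exact Prod.ext (piMap_vec F₀ hF av _ _) (qMap_vec F₀ hF _ _)
  have hE2 : ∀ v : Gn × (↥(Wset F₀ hF) →₀ ℤ), ψ (φinv v) = v := by
    have hcomp : (ψ.comp (liftZ F₀ hF av1)) =
        (AddMonoidHom.inr Gn (↥(Wset F₀ hF) →₀ ℤ)) := by
      apply Finsupp.addHom_ext
      intro w k
      have h1 : Finsupp.single w k = k • Finsupp.single w (1:ℤ) := by
        rw [Finsupp.smul_single, smul_eq_mul, mul_one]
      rw [AddMonoidHom.comp_apply, h1, map_zsmul, map_zsmul, hliftsingle w]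
      rw [map_zsmul]
      rw [show (AddMonoidHom.inr Gn (↥(Wset F₀ hF) →₀ ℤ)) (Finsupp.single w (1:ℤ))
        = ((0:Gn), Finsupp.single w (1:ℤ)) from rfl]
    rintro ⟨x, z⟩
    have hsplit : (x, z) = (x, (0 : ↥(Wset F₀ hF) →₀ ℤ)) + ((0:Gn), z) := by
      rw [Prod.mk_add_mk, add_zero, zero_add]
    rw [hsplit, map_add, map_add]
    have hxz : φinv (x, (0 : ↥(Wset F₀ hF) →₀ ℤ)) = g x := by
      rw [hφinv, AddMonoidHom.coprod_apply, map_zero, add_zero]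
    have hz2 : ψ (φinv ((0:Gn), z)) = ((0:Gn), z) := by
      have h3 : φinv ((0:Gn), z) = liftZ F₀ hF av1 z := by
        rw [hφinv, AddMonoidHom.coprod_apply, map_zero, zero_add]
      rw [h3]
      exact DFunLike.congr_fun hcomp z
    rw [hxz, hE3 x, hz2, Prod.mk_add_mk, add_zero, zero_add]
  exact ⟨Wset F₀ hF,
    { toFun := ψ, invFun := φinv, left_inv := hE1, right_inv := hE2,
      map_add' := ψ.map_add }, hE3⟩



end BSGaux

end AuxStep


/-- Theorem 4.4 (K₀ for the tame algebra, monoid form): for a finite bipartite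
separated graph `(E,C)` with canonical sequence `(E_n,C^n)` and connecting maps
`G(ι_n)`, the natural homomorphism `G(M(E,C)) → lim_n G(M(E_n,C^n))` is a split
monomorphism whose cokernel is free abelian: there are finite subsets
`W_k ⊆ E_k^{0,0}` (`k ≥ 2`) with
`lim_n G(M(E_n,C^n)) ≅ G(M(E,C)) ⊕ (⊕_{k≥2} ℤ^(W_k))`. -/
theorem stmt16 (G : BSG) (hG : G.Valid)
    -- the monoids M(E_n, C^n)
    (M : ℕ → Type) [∀ n, AddCommMonoid (M n)]
    (a : ∀ n, ((seqG G n).V0 ⊕ (seqG G n).V1) → M n)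
    (hM : ∀ n, IsBipGraphMonoid (seqG G n) (a n))
    -- the connecting monoid homomorphisms ι_n
    (φ : ∀ n, M n →+ M (n + 1))
    (hφ0 : ∀ n (u : (seqG G n).V0), φ n (a n (Sum.inl u)) =
      ∑ᶠ t : ((X : {X : Set (seqG G n).E // X ∈ (seqG G n).C u}) → ↥X.1),
        a (n + 1) (Sum.inr (⟨u, t⟩ : (seqG G n).NewVert)))
    (hφ1 : ∀ n (w : (seqG G n).V1), φ n (a n (Sum.inr w)) = a (n + 1) (Sum.inl w))
    -- the Grothendieck groups G(M(E_n,C^n)) and the induced maps G(ι_n)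
    (Gr : ℕ → Type) [∀ n, AddCommGroup (Gr n)]
    (ι : ∀ n, M n →+ Gr n) (hGr : ∀ n, IsGroth (ι n))
    (g : ∀ n, Gr n →+ Gr (n + 1))
    (hg : ∀ n, (g n).comp (ι n) = (ι (n + 1)).comp (φ n))
    -- the direct limit L of the sequence (Gr n, g n)
    (L : Type) [AddCommGroup L] (ℓ : ∀ n, Gr n →+ L)
    (hℓ : ∀ n, (ℓ (n + 1)).comp (g n) = ℓ n)
    (hL : ∀ (H : Type) [AddCommGroup H] (h : ∀ n, Gr n →+ H),
      (∀ n, (h (n + 1)).comp (g n) = h n) → ∃! ψ : L →+ H, ∀ n, ψ.comp (ℓ n) = h n) :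
    ∃ W : (k : ℕ) → Set ((seqG G k).V0), (∀ k, (W k).Finite) ∧
      ∃ e : L ≃+ (Gr 0 × (Π₀ k : ℕ, (↥(W (k + 2)) →₀ ℤ))),
        ∀ x : Gr 0, e (ℓ 0 x) = (x, 0) := by
  classical
  have hval : ∀ n, (seqG G n).Valid := BSGaux.seq_valid hG
  -- the combined universal property of `Gr n`
  have UP : ∀ n (H : Type) [AddCommGroup H], ∀ (b : (seqG G n).V0 ⊕ (seqG G n).V1 → H),
      BipRel (seqG G n) b → ∃! Φ : Gr n →+ H, ∀ p, Φ (ι n (a n p)) = b p := by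
    intro n H _ b hb
    obtain ⟨φM, hφM, hφMu⟩ := (hM n).2 H b hb
    obtain ⟨Φ, hΦ, hΦu⟩ := hGr n H φM
    refine ⟨Φ, fun p => ?_, fun Φ' hΦ' => ?_⟩
    · rw [← hφM p]
      have := DFunLike.congr_fun hΦ (a n p)
      rw [AddMonoidHom.comp_apply] at this
      exact this
    · refine hΦu Φ' (hφMu (Φ'.comp (ι n)) fun p => ?_)
      rw [AddMonoidHom.comp_apply]
      exact hΦ' p
  -- BipRel for the canonical generators in `Gr n`
  have brG : ∀ n, BipRel (seqG G n) (fun p => ι n (a n p)) := by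
    intro n
    refine BSGaux.bipRel_comp (fun v Y _ => ?_) (ι n) (hM n).1
    haveI := (hval n).finE
    exact Set.toFinite Y
  -- the one-step splittings
  have hstep : ∀ n, ∃ (Wn : Set ((seqG G n).NewVert))
      (e : Gr (n+1) ≃+ Gr n × (↥Wn →₀ ℤ)), ∀ x : Gr n, e (g n x) = (x, 0) := by
    intro n
    refine BSGaux.step_iso (seqG G n) (hval n)
      (fun p => ι n (a n p)) (fun p => ι (n+1) (a (n+1) p))
      (brG n) (brG (n+1)) (UP n) (UP (n+1)) (g n) ?_ ?_
    · intro u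
      have h1 := DFunLike.congr_fun (hg n) (a n (Sum.inl u))
      rw [AddMonoidHom.comp_apply, AddMonoidHom.comp_apply] at h1
      rw [h1, hφ0 n u]
      haveI : Finite ((X : {X : Set (seqG G n).E // X ∈ (seqG G n).C u}) → ↥X.1) := by
        haveI := (hval n).finE
        exact inferInstance
      exact AddMonoidHom.map_finsum (ι (n+1)) (Set.toFinite _)
    · intro w
      have h1 := DFunLike.congr_fun (hg n) (a n (Sum.inr w))
      rw [AddMonoidHom.comp_apply, AddMonoidHom.comp_apply] at h1
      rw [h1, hφ1 n w]
      rfl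
  choose Wf ef hef using hstep
  -- the sets W k
  refine ⟨fun k => match k with
    | 0 => (∅ : Set ((seqG G 0).V0))
    | 1 => (∅ : Set ((seqG G 1).V0))
    | (k+2) => (Wf k : Set ((seqG G (k+2)).V0)), fun k => ?_, ?_⟩
  · match k with
    | 0 => exact Set.finite_empty
    | 1 => exact Set.finite_empty
    | (k+2) =>
      haveI := (hval (k+2)).finV0
      exact Set.toFinite _
  -- the target group and the compatible family of maps
  · set TT := Gr 0 × (Π₀ k : ℕ, (↥(Wf k) →₀ ℤ)) with hTT
    let jmap : ∀ n, (↥(Wf n) →₀ ℤ) →+ (Π₀ k : ℕ, (↥(Wf k) →₀ ℤ)) := fun n =>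
      DFinsupp.singleAddHom (fun k => ↥(Wf k) →₀ ℤ) n
    let hmap : ∀ n, Gr n →+ TT := fun n => Nat.rec
      (AddMonoidHom.inl (Gr 0) (Π₀ k : ℕ, (↥(Wf k) →₀ ℤ)))
      (fun n ih => ((ih.coprod ((AddMonoidHom.inr (Gr 0) _).comp (jmap n))).comp
        (ef n).toAddMonoidHom)) n
    have hmap_succ : ∀ n (y : Gr (n+1)), hmap (n+1) y =
        hmap n ((ef n y).1) + (0, DFinsupp.single n ((ef n y).2)) := by
      intro n y
      show ((hmap n).coprod ((AddMonoidHom.inr (Gr 0) _).comp (jmap n))) (ef n y) = _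
      rw [AddMonoidHom.coprod_apply]
      rfl
    have hcomp : ∀ n, (hmap (n+1)).comp (g n) = hmap n := by
      intro n
      refine AddMonoidHom.ext fun x => ?_
      rw [AddMonoidHom.comp_apply, hmap_succ n (g n x), hef n x]
      simp
      rfl
    obtain ⟨ψL, hψL, hψLu⟩ := hL TT hmap hcomp
    -- the inverse map
    let DL : (Π₀ k : ℕ, (↥(Wf k) →₀ ℤ)) →+ L := DFinsupp.liftAddHom
      (fun k => (ℓ (k+1)).comp ((ef k).symm.toAddMonoidHom.comp
        (AddMonoidHom.inr (Gr k) (↥(Wf k) →₀ ℤ))))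
    let χ : TT →+ L := (ℓ 0).coprod DL
    have hDLsingle : ∀ (k : ℕ) (z : ↥(Wf k) →₀ ℤ),
        DL (DFinsupp.single k z) = ℓ (k+1) ((ef k).symm (0, z)) := by
      intro k z
      exact DFinsupp.liftAddHom_apply_single
        (fun k => (ℓ (k+1)).comp ((ef k).symm.toAddMonoidHom.comp
          (AddMonoidHom.inr (Gr k) (↥(Wf k) →₀ ℤ)))) k z
    have hχ0 : ∀ (x : Gr 0) (d : Π₀ k : ℕ, (↥(Wf k) →₀ ℤ)), χ (x, d) = ℓ 0 x + DL d :=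
      fun x d => rfl
    have hχh : ∀ n, χ.comp (hmap n) = ℓ n := by
      intro n
      induction n with
      | zero =>
        refine AddMonoidHom.ext fun x => ?_
        show χ ((x, 0) : TT) = ℓ 0 x
        rw [hχ0, map_zero, add_zero]
      | succ n ih =>
        refine AddMonoidHom.ext fun y => ?_
        rw [AddMonoidHom.comp_apply, hmap_succ n y, map_add]
        have h1 : χ (hmap n ((ef n y).1)) = ℓ n ((ef n y).1) := by
          rw [← AddMonoidHom.comp_apply, ih]
        have h2 : χ ((0 : Gr 0), DFinsupp.single n ((ef n y).2)) =
            ℓ (n+1) ((ef n).symm (0, (ef n y).2)) := by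
          rw [hχ0, map_zero, zero_add, hDLsingle]
        rw [h1, h2]
        have h3 : ℓ n ((ef n y).1) = ℓ (n+1) ((ef n).symm ((ef n y).1, 0)) := by
          have h4 : g n ((ef n y).1) = (ef n).symm ((ef n y).1, 0) := by
            rw [AddEquiv.eq_symm_apply]
            exact hef n ((ef n y).1)
          rw [← h4, ← AddMonoidHom.comp_apply, hℓ n]
        rw [h3, ← map_add, ← map_add, Prod.mk_add_mk, add_zero, zero_add, Prod.mk.eta,
          AddEquiv.symm_apply_apply]
    -- χ ∘ ψL = id
    have hχψ : ∀ y : L, χ (ψL y) = y := by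
      obtain ⟨Ψ₀, -, hΨu⟩ := hL L ℓ hℓ
      have e1 : χ.comp ψL = Ψ₀ := hΨu (χ.comp ψL) (fun n => by
        rw [AddMonoidHom.comp_assoc, hψL n, hχh n])
      have e2 : AddMonoidHom.id L = Ψ₀ := hΨu _ (fun n => AddMonoidHom.ext fun x => rfl)
      intro y
      exact DFunLike.congr_fun (e1.trans e2.symm) y
    -- ψL ∘ χ = id
    have hψχ : ∀ v : TT, ψL (χ v) = v := by
      have hDcomp : ψL.comp DL = AddMonoidHom.inr (Gr 0) (Π₀ k : ℕ, (↥(Wf k) →₀ ℤ)) := by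
        refine DFinsupp.addHom_ext' fun k => AddMonoidHom.ext fun z => ?_
        rw [AddMonoidHom.comp_apply, AddMonoidHom.comp_apply, DFinsupp.singleAddHom_apply,
          hDLsingle k z]
        have h1 : ψL (ℓ (k+1) ((ef k).symm (0, z))) = hmap (k+1) ((ef k).symm (0, z)) := by
          rw [← AddMonoidHom.comp_apply, hψL (k+1)]
        rw [h1, hmap_succ k ((ef k).symm (0, z)), AddEquiv.apply_symm_apply]
        show hmap k 0 + _ = _
        rw [map_zero, zero_add]
        rfl
      rintro ⟨x, d⟩
      have hsplit : ((x, d) : TT) = (x, 0) + (0, d) := by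
        rw [Prod.mk_add_mk, add_zero, zero_add]
      rw [hsplit, map_add, map_add]
      have h1 : ψL (χ ((x, 0) : TT)) = (x, 0) := by
        rw [hχ0, map_zero, add_zero, ← AddMonoidHom.comp_apply, hψL 0]
        rfl
      have h2 : ψL (χ ((0, d) : TT)) = ((0 : Gr 0), d) := by
        rw [hχ0, map_zero, zero_add, ← AddMonoidHom.comp_apply, hDcomp]
        rfl
      rw [h1, h2, Prod.mk_add_mk, add_zero, zero_add]
    refine ⟨⟨⟨ψL, χ, hχψ, hψχ⟩, ψL.map_add⟩, fun x => ?_⟩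
    show ψL (ℓ 0 x) = (x, 0)
    rw [← AddMonoidHom.comp_apply, hψL 0]
    rfl
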